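/- For α > -1 and m ≠ n, the polynomials l_n^α(x) = Σ_{m'=0}^{n} (-1)^{n+m'} n!(α+1)_n / (m'!(n-m')!(α+1)_{m'}) x^{m'} are orthogonal with respect to the weight x^α e^{-x} on (0,∞): ∫_0^∞ l_n^α(x) l_m^α(x) x^α e^{-x} dx = 0. -/

import Mathlib

open Finset Polynomial MeasureTheory
open scoped fwdDiff

noncomputable def poch (a : ℝ) (k : ℕ) : ℝ := (ascPochhammer ℝ k).eval a

noncomputable def lagGS (α : ℝ) (n : ℕ) (x : ℝ) : ℝ :=
  ∑ m ∈ Finset.range (n + 1),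
    (-1 : ℝ) ^ (n + m) * (n.factorial : ℝ) * poch (α + 1) n
      / ((m.factorial : ℝ) * ((n - m).factorial : ℝ) * poch (α + 1) m) * x ^ m

lemma fwdDiff_poly_eval (p : ℝ[X]) :
    Δ_[(1:ℝ)] (fun x : ℝ => p.eval x) = fun x : ℝ => (p.comp (X + C 1) - p).eval x := by
  funext x
  simp [fwdDiff, eval_comp]

lemma degree_comp_sub_lt (p : ℝ[X]) {n : ℕ} (hp : p.degree < n + 1) :
    (p.comp (X + C 1) - p).degree < n := by
  rcases le_or_gt p.degree 0 with h | h
  · have hC : p.comp (X + C 1) - p = 0 := by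
      rw [Polynomial.eq_C_of_degree_le_zero h]
      simp
    rw [hC, degree_zero]
    exact bot_lt_iff_ne_bot.2 (by simp)
  · have hp0 : p ≠ 0 := fun h0 => by simp [h0] at h
    have hq : (X + C (1:ℝ)).natDegree = 1 := natDegree_X_add_C 1
    have hlc : (p.comp (X + C 1)).leadingCoeff = p.leadingCoeff := by
      rw [leadingCoeff_comp (by rw [hq]; norm_num)]
      have hx : (X + C (1:ℝ)).leadingCoeff = 1 := leadingCoeff_X_add_C 1
      rw [hx, one_pow, mul_one]
    have hc0 : p.comp (X + C 1) ≠ 0 := by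
      intro h0
      rw [h0, leadingCoeff_zero] at hlc
      exact hp0 (leadingCoeff_eq_zero.mp hlc.symm)
    have hdc : (p.comp (X + C 1)).degree = p.degree := by
      rw [degree_eq_natDegree hc0, degree_eq_natDegree hp0, natDegree_comp, hq, mul_one]
    have hlt : (p.comp (X + C 1) - p).degree < p.degree := by
      rw [← hdc]
      exact degree_sub_lt hdc hc0 hlc
    have hle : p.degree ≤ (n : WithBot ℕ) := by
      rw [degree_eq_natDegree hp0] at hp ⊢
      exact_mod_cast Nat.lt_succ_iff.mp (by exact_mod_cast hp)
    exact lt_of_lt_of_le hlt hle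

lemma fwdDiff_iter_poly_zero : ∀ (n : ℕ) (p : ℝ[X]), p.degree < n →
    (Δ_[(1:ℝ)])^[n] (fun x : ℝ => p.eval x) = fun _ => 0 := by
  intro n
  induction n with
  | zero =>
    intro p hp
    have : p = 0 := by
      rw [← degree_eq_bot]
      exact Nat.WithBot.lt_zero_iff.mp (by exact_mod_cast hp)
    simp [this]
  | succ n ih =>
    intro p hp
    rw [Function.iterate_succ_apply, fwdDiff_poly_eval]
    exact ih _ (degree_comp_sub_lt p (by exact_mod_cast hp))

lemma alt_sum_poly (n : ℕ) (p : ℝ[X]) (hp : p.degree < n) :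
    ∑ k ∈ range (n + 1), (-1 : ℝ) ^ k * (n.choose k : ℝ) * p.eval (k : ℝ) = 0 := by
  have h0 := fwdDiff_iter_eq_sum_shift (1 : ℝ) (fun x : ℝ => p.eval x) n 0
  rw [fwdDiff_iter_poly_zero n p hp] at h0
  have h1 : ∑ k ∈ range (n + 1),
      ((-1 : ℤ) ^ (n - k) * (n.choose k : ℤ)) • p.eval ((0 : ℝ) + k • (1 : ℝ)) = 0 := by
    rw [← h0]
  have h1' : ∑ k ∈ range (n + 1),
      (-1 : ℝ) ^ (n - k) * (n.choose k : ℝ) * p.eval (k : ℝ) = 0 := by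
    rw [← h1]
    refine Finset.sum_congr rfl fun k _ => ?_
    push_cast [zsmul_eq_mul]
    norm_num
  have h1 : (0 : ℝ) = ∑ k ∈ range (n + 1),
      (-1 : ℝ) ^ (n - k) * (n.choose k : ℝ) * p.eval (k : ℝ) := h1'.symm
  have h2 : ∀ k ∈ range (n + 1), (-1 : ℝ) ^ (n - k) * (n.choose k : ℝ) * p.eval (k : ℝ)
      = (-1 : ℝ) ^ n * ((-1 : ℝ) ^ k * (n.choose k : ℝ) * p.eval (k : ℝ)) := by
    intro k hk
    have hkn : k ≤ n := Nat.lt_succ_iff.mp (mem_range.mp hk)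
    have hsq : (-1 : ℝ) ^ k * (-1 : ℝ) ^ k = 1 := by rw [← mul_pow]; norm_num
    have : (-1 : ℝ) ^ (n - k) = (-1 : ℝ) ^ n * (-1 : ℝ) ^ k := by
      calc (-1 : ℝ) ^ (n - k) = (-1 : ℝ) ^ (n - k) * ((-1 : ℝ) ^ k * (-1 : ℝ) ^ k) := by
            rw [hsq, mul_one]
        _ = ((-1 : ℝ) ^ (n - k) * (-1 : ℝ) ^ k) * (-1 : ℝ) ^ k := by ring
        _ = (-1 : ℝ) ^ n * (-1 : ℝ) ^ k := by rw [← pow_add, Nat.sub_add_cancel hkn]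
    rw [this]; ring
  rw [Finset.sum_congr rfl h2, ← Finset.mul_sum] at h1
  have := h1.symm
  rcases mul_eq_zero.mp this with h | h
  · exact absurd h (by positivity)
  · exact h

lemma poch_pos {a : ℝ} (ha : 0 < a) (k : ℕ) : 0 < poch a k :=
  ascPochhammer_pos k a ha

lemma poch_succ (a : ℝ) (k : ℕ) : poch a (k + 1) = poch a k * (a + k) :=
  ascPochhammer_succ_eval k a

lemma Gamma_poch {a : ℝ} (ha : 0 < a) (k : ℕ) :
    Real.Gamma (a + k) = Real.Gamma a * poch a k := by
  induction k with
  | zero => simp [poch]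
  | succ k ih =>
    have hne : a + k ≠ 0 := by positivity
    have : a + ((k : ℝ) + 1) = (a + k) + 1 := by ring
    push_cast
    rw [this, Real.Gamma_add_one hne, ih, poch_succ]
    ring

lemma poch_add (a : ℝ) (j k : ℕ) : poch a (j + k) = poch a j * poch (a + j) k := by
  induction k with
  | zero => simp [poch]
  | succ k ih =>
    rw [← add_assoc, poch_succ, ih, poch_succ]
    push_cast
    ring


lemma mono_integrable (α : ℝ) (hα : -1 < α) (j : ℕ) :
    IntegrableOn (fun x : ℝ => x ^ j * x ^ α * Real.exp (-x)) (Set.Ioi 0) := by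
  have hs : 0 < α + j + 1 := by
    have : (0:ℝ) ≤ j := Nat.cast_nonneg j
    linarith
  have h := Real.GammaIntegral_convergent hs
  refine h.congr_fun (fun x hx => ?_) measurableSet_Ioi
  rw [Set.mem_Ioi] at hx
  beta_reduce
  rw [show α + (j : ℝ) + 1 - 1 = α + j by ring, Real.rpow_add hx, Real.rpow_natCast]
  ring

lemma mono_integral (α : ℝ) (hα : -1 < α) (j : ℕ) :
    ∫ x in Set.Ioi (0:ℝ), x ^ j * x ^ α * Real.exp (-x) = Real.Gamma (α + 1 + j) := by
  have hs : 0 < α + 1 + j := by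
    have : (0:ℝ) ≤ j := Nat.cast_nonneg j
    linarith
  rw [Real.Gamma_eq_integral hs]
  refine setIntegral_congr_fun measurableSet_Ioi (fun x hx => ?_)
  rw [Set.mem_Ioi] at hx
  rw [show α + 1 + (j : ℝ) - 1 = α + j by ring, Real.rpow_add hx, Real.rpow_natCast]
  ring

lemma lag_decomp (α : ℝ) (n k : ℕ) (x : ℝ) :
    lagGS α n x * x ^ k * x ^ α * Real.exp (-x)
      = ∑ m' ∈ range (n + 1),
        ((-1 : ℝ) ^ (n + m') * (n.factorial : ℝ) * poch (α + 1) n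
          / ((m'.factorial : ℝ) * ((n - m').factorial : ℝ) * poch (α + 1) m'))
          * (x ^ (m' + k) * x ^ α * Real.exp (-x)) := by
  rw [lagGS, Finset.sum_mul, Finset.sum_mul, Finset.sum_mul]
  refine Finset.sum_congr rfl fun m' _ => ?_
  rw [pow_add]
  ring

lemma lag_mono_integrable (α : ℝ) (hα : -1 < α) (n k : ℕ) :
    IntegrableOn (fun x : ℝ => lagGS α n x * x ^ k * x ^ α * Real.exp (-x)) (Set.Ioi 0) := by
  have hfun : (fun x : ℝ => lagGS α n x * x ^ k * x ^ α * Real.exp (-x))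
      = fun x : ℝ => ∑ m' ∈ range (n + 1),
        ((-1 : ℝ) ^ (n + m') * (n.factorial : ℝ) * poch (α + 1) n
          / ((m'.factorial : ℝ) * ((n - m').factorial : ℝ) * poch (α + 1) m'))
          * (x ^ (m' + k) * x ^ α * Real.exp (-x)) := funext (lag_decomp α n k)
  rw [hfun]
  exact integrable_finset_sum _ fun m' _ => (mono_integrable α hα (m' + k)).const_mul _

lemma moment_zero (α : ℝ) (hα : -1 < α) {k n : ℕ} (hk : k < n) :
    ∫ x in Set.Ioi (0:ℝ), lagGS α n x * x ^ k * x ^ α * Real.exp (-x) = 0 := by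
  have hα1 : (0:ℝ) < α + 1 := by linarith
  set q : ℝ[X] := (ascPochhammer ℝ k).comp (X + C (α + 1)) with hq
  have hqdeg : q.degree < n := by
    have h1 : q.natDegree = k := by
      rw [hq, natDegree_comp, ascPochhammer_natDegree, natDegree_X_add_C, mul_one]
    calc q.degree ≤ (q.natDegree : WithBot ℕ) := degree_le_natDegree
      _ < (n : WithBot ℕ) := by rw [h1]; exact_mod_cast hk
  have hqeval : ∀ m' : ℕ, q.eval (m' : ℝ) = poch (α + 1 + m') k := by
    intro m'
    rw [hq, eval_comp]
    simp only [eval_add, eval_X, eval_C, poch]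
    rw [show (m' : ℝ) + (α + 1) = α + 1 + m' by ring]
  calc ∫ x in Set.Ioi (0:ℝ), lagGS α n x * x ^ k * x ^ α * Real.exp (-x)
      = ∫ x in Set.Ioi (0:ℝ), ∑ m' ∈ range (n + 1),
        ((-1 : ℝ) ^ (n + m') * (n.factorial : ℝ) * poch (α + 1) n
          / ((m'.factorial : ℝ) * ((n - m').factorial : ℝ) * poch (α + 1) m'))
          * (x ^ (m' + k) * x ^ α * Real.exp (-x)) := by
        exact integral_congr_ae (Filter.Eventually.of_forall fun x => lag_decomp α n k x)
    _ = ∑ m' ∈ range (n + 1),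
        ((-1 : ℝ) ^ (n + m') * (n.factorial : ℝ) * poch (α + 1) n
          / ((m'.factorial : ℝ) * ((n - m').factorial : ℝ) * poch (α + 1) m'))
          * Real.Gamma (α + 1 + (m' + k)) := by
        rw [integral_finset_sum _ fun m' _ => (mono_integrable α hα (m' + k)).const_mul _]
        refine Finset.sum_congr rfl fun m' _ => ?_
        rw [MeasureTheory.integral_const_mul, mono_integral α hα (m' + k)]
        push_cast
        ring_nf
    _ = ((-1 : ℝ) ^ n * Real.Gamma (α + 1) * poch (α + 1) n) *
        ∑ m' ∈ range (n + 1), (-1 : ℝ) ^ m' * (n.choose m' : ℝ) * q.eval (m' : ℝ) := by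
        rw [Finset.mul_sum]
        refine Finset.sum_congr rfl fun m' hm' => ?_
        have hm'n : m' ≤ n := Nat.lt_succ_iff.mp (mem_range.mp hm')
        have hG : Real.Gamma (α + 1 + ((m' : ℝ) + (k : ℝ)))
            = Real.Gamma (α + 1) * poch (α + 1) m' * poch (α + 1 + m') k := by
          rw [show α + 1 + ((m' : ℝ) + (k : ℝ)) = (α + 1) + ((m' + k : ℕ) : ℝ) by push_cast; ring,
            Gamma_poch hα1 (m' + k), poch_add, mul_assoc]
        push_cast
        rw [hG, hqeval m']
        have hfact : (n.factorial : ℝ)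
            = (n.choose m' : ℝ) * (m'.factorial : ℝ) * ((n - m').factorial : ℝ) := by
          exact_mod_cast (Nat.choose_mul_factorial_mul_factorial hm'n).symm
        have hp0 : poch (α + 1) m' ≠ 0 := ne_of_gt (poch_pos hα1 m')
        have hf1 : (m'.factorial : ℝ) ≠ 0 := Nat.cast_ne_zero.mpr m'.factorial_ne_zero
        have hf2 : ((n - m').factorial : ℝ) ≠ 0 := Nat.cast_ne_zero.mpr (n - m').factorial_ne_zero
        rw [pow_add, hfact]
        field_simp
    _ = 0 := by rw [alt_sum_poly n q hqdeg, mul_zero]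

lemma main_lt (α : ℝ) (hα : -1 < α) {n m : ℕ} (hmn : m < n) :
    ∫ x in Set.Ioi (0 : ℝ), lagGS α n x * lagGS α m x * x ^ α * Real.exp (-x) = 0 := by
  have hfun : ∀ x : ℝ, lagGS α n x * lagGS α m x * x ^ α * Real.exp (-x)
      = ∑ k ∈ range (m + 1),
        ((-1 : ℝ) ^ (m + k) * (m.factorial : ℝ) * poch (α + 1) m
          / ((k.factorial : ℝ) * ((m - k).factorial : ℝ) * poch (α + 1) k))
          * (lagGS α n x * x ^ k * x ^ α * Real.exp (-x)) := by
    intro x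
    rw [show lagGS α m x = ∑ k ∈ range (m + 1),
        ((-1 : ℝ) ^ (m + k) * (m.factorial : ℝ) * poch (α + 1) m
          / ((k.factorial : ℝ) * ((m - k).factorial : ℝ) * poch (α + 1) k)) * x ^ k from rfl,
      Finset.mul_sum, Finset.sum_mul, Finset.sum_mul]
    exact Finset.sum_congr rfl fun k _ => by ring
  calc ∫ x in Set.Ioi (0 : ℝ), lagGS α n x * lagGS α m x * x ^ α * Real.exp (-x)
      = ∫ x in Set.Ioi (0 : ℝ), ∑ k ∈ range (m + 1),
        ((-1 : ℝ) ^ (m + k) * (m.factorial : ℝ) * poch (α + 1) m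
          / ((k.factorial : ℝ) * ((m - k).factorial : ℝ) * poch (α + 1) k))
          * (lagGS α n x * x ^ k * x ^ α * Real.exp (-x)) :=
        integral_congr_ae (Filter.Eventually.of_forall hfun)
    _ = ∑ k ∈ range (m + 1),
        ((-1 : ℝ) ^ (m + k) * (m.factorial : ℝ) * poch (α + 1) m
          / ((k.factorial : ℝ) * ((m - k).factorial : ℝ) * poch (α + 1) k))
          * ∫ x in Set.Ioi (0 : ℝ), lagGS α n x * x ^ k * x ^ α * Real.exp (-x) := by
        rw [integral_finset_sum _ fun k _ => (lag_mono_integrable α hα n k).const_mul _]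
        exact Finset.sum_congr rfl fun k _ => MeasureTheory.integral_const_mul _ _
    _ = 0 := by
        rw [Finset.sum_eq_zero]
        intro k hk
        have hkn : k < n := lt_of_le_of_lt (Nat.lt_succ_iff.mp (mem_range.mp hk)) hmn
        rw [moment_zero α hα hkn, mul_zero]

theorem lagGS_orthogonal (α : ℝ) (hα : -1 < α) (n m : ℕ) (hnm : m ≠ n) :
    ∫ x in Set.Ioi (0 : ℝ), lagGS α n x * lagGS α m x * x ^ α * Real.exp (-x) = 0 := by
  rcases hnm.lt_or_gt with h | h
  · exact main_lt α hα h
  · calc ∫ x in Set.Ioi (0 : ℝ), lagGS α n x * lagGS α m x * x ^ α * Real.exp (-x)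
        = ∫ x in Set.Ioi (0 : ℝ), lagGS α m x * lagGS α n x * x ^ α * Real.exp (-x) :=
          integral_congr_ae (Filter.Eventually.of_forall fun x => by ring)
      _ = 0 := main_lt α hα h
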